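/- Let H be the 3×3 matrix with rows (1,0,0), (1,2,0), (1,1,1), and consider the deterministic interference channel with noiseless integer inputs: ȳᵢ(t) = Σ_{j=1}^3 h_{ji} x̄ⱼ(t), x̄ⱼ(t) ∈ ℤ, (1/n)Σ_t x̄ⱼ(t)² ≤ P. Then its degrees-of-freedom, defined as limsup_{P→∞} [max_{R ∈ C_D(H,P·𝟏)} (R₁+R₂+R₃)]/((1/2)log₂ P), is at least (2 + log₂ 3)/3. -/

import Mathlib

open MeasureTheory ProbabilityTheory Filter

namespace GIFC

/-- Number of messages of a user with rate `R` at blocklength `n`: `2^⌈nR⌉`. -/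
noncomputable def nMsg (n : ℕ) (R : ℝ) : ℕ := 2 ^ (⌈(n : ℝ) * R⌉.toNat)

/-- A blocklength-`n` coding scheme for a `K`-user interference channel with
rate tuple `R`: encoders mapping messages to real codewords, and decoders
mapping received real signals to messages. -/
structure Scheme (K n : ℕ) (R : Fin K → ℝ) where
  enc : (i : Fin K) → Fin (nMsg n (R i)) → Fin n → ℝ
  dec : (i : Fin K) → (Fin n → ℝ) → Fin (nMsg n (R i))

/-- The per-codeword average power constraints `∑_t x_{i,t}² ≤ n Pᵢ`. -/
def Scheme.PowerOK {K n : ℕ} {R : Fin K → ℝ} (s : Scheme K n R) (P : Fin K → ℝ) : Prop :=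
  ∀ i w, ∑ t, (s.enc i w t) ^ 2 ≤ n * P i

/-- The joint law of the additive Gaussian noises `z_{j,t}`, i.i.d. over time with
variance `σsq j` at receiver `j`. -/
noncomputable def noiseMeasure (K n : ℕ) (σsq : Fin K → ℝ) :
    Measure (Fin K → Fin n → ℝ) :=
  Measure.pi fun j => Measure.pi fun _ => gaussianReal 0 (σsq j).toNNReal

/-- Average probability that receiver `i` decodes wrongly: the messages are
uniform and independent, receiver `i` observes `y_{i,t} = ∑_j h_{j i} x_{j,t} + z_{i,t}`. -/
noncomputable def Scheme.errProb {K n : ℕ} {R : Fin K → ℝ} (s : Scheme K n R)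
    (H : Matrix (Fin K) (Fin K) ℝ) (σsq : Fin K → ℝ) (i : Fin K) : ℝ :=
  (∑ w : (j : Fin K) → Fin (nMsg n (R j)),
      (noiseMeasure K n σsq
        {z | s.dec i (fun t => (∑ j, H j i * s.enc j (w j) t) + z i t) ≠ w i}).toReal) /
    (∏ j, (nMsg n (R j) : ℝ))

/-- The capacity region `C(H, σ², P)` of the `K`-user Gaussian interference channel:
rate tuples for which some sequence of power-constrained schemes has (maximal)
error probability tending to `0` with the blocklength. -/
def capacityRegion (K : ℕ) (H : Matrix (Fin K) (Fin K) ℝ) (σsq P : Fin K → ℝ) :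
    Set (Fin K → ℝ) :=
  {R | ∃ s : (n : ℕ) → Scheme K n R,
        (∀ n, (s n).PowerOK P) ∧
        ∀ i, Tendsto (fun n => (s n).errProb H σsq i) atTop (nhds 0)}

/-- The degrees-of-freedom of the gain matrix `H`:
`limsup_{P→∞} (max_{R ∈ C(H,1,P·1)} ∑ᵢ Rᵢ) / ((1/2) log₂ P)`. -/
noncomputable def DoF (K : ℕ) (H : Matrix (Fin K) (Fin K) ℝ) : ℝ :=
  limsup (fun P : ℝ =>
      sSup {x | ∃ R ∈ capacityRegion K H (fun _ => 1) (fun _ => P), x = ∑ i, R i} /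
        ((1 / 2) * Real.logb 2 P)) atTop

/-- `H` is fully connected if all its entries are nonzero. -/
def FullyConnected {K : ℕ} (H : Matrix (Fin K) (Fin K) ℝ) : Prop := ∀ i j, H i j ≠ 0


/-- A blocklength-`n` coding scheme for the deterministic `K`-user interference
channel: codewords are integer valued, received signals are noiseless reals. -/
structure DetScheme (K n : ℕ) (R : Fin K → ℝ) where
  enc : (i : Fin K) → Fin (nMsg n (R i)) → Fin n → ℤ
  dec : (i : Fin K) → (Fin n → ℝ) → Fin (nMsg n (R i))

/-- The average power constraints `(1/n) ∑_t x̄_{i,t}² ≤ Pᵢ`. -/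
def DetScheme.PowerOK {K n : ℕ} {R : Fin K → ℝ} (s : DetScheme K n R) (P : Fin K → ℝ) :
    Prop :=
  ∀ i w, ∑ t, ((s.enc i w t : ℝ)) ^ 2 ≤ n * P i

/-- Average error probability of receiver `i` in the deterministic channel with
noiseless outputs `ȳ_{i,t} = ∑_j h_{j i} x̄_{j,t}`: the fraction of (uniform,
independent) message tuples that are decoded incorrectly. -/
noncomputable def DetScheme.errProb {K n : ℕ} {R : Fin K → ℝ} (s : DetScheme K n R)
    (H : Matrix (Fin K) (Fin K) ℝ) (i : Fin K) : ℝ :=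
  ((Finset.univ.filter fun w : (j : Fin K) → Fin (nMsg n (R j)) =>
      s.dec i (fun t => ∑ j, H j i * (s.enc j (w j) t : ℝ)) ≠ w i).card : ℝ) /
    (∏ j, (nMsg n (R j) : ℝ))

/-- The capacity region `C_D(H, P)` of the deterministic integer-input
interference channel associated with `H`. -/
def detCapacityRegion (K : ℕ) (H : Matrix (Fin K) (Fin K) ℝ) (P : Fin K → ℝ) :
    Set (Fin K → ℝ) :=
  {R | ∃ s : (n : ℕ) → DetScheme K n R,
        (∀ n, (s n).PowerOK P) ∧
        ∀ i, Tendsto (fun n => (s n).errProb H i) atTop (nhds 0)}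

/-- The degrees-of-freedom of the deterministic integer-input interference channel. -/
noncomputable def detDoF (K : ℕ) (H : Matrix (Fin K) (Fin K) ℝ) : ℝ :=
  limsup (fun P : ℝ =>
      sSup {x | ∃ R ∈ detCapacityRegion K H (fun _ => P), x = ∑ i, R i} /
        ((1 / 2) * Real.logb 2 P)) atTop


open Finset



lemma sum_digits_lt (b : ℕ) (hb : 0 < b) (d : ℕ → ℕ) (L : ℕ) (hd : ∀ l, d l < b) :
    ∑ l ∈ range L, d l * b ^ l < b ^ L := by
  induction L with
  | zero => simpa using hb
  | succ L ih =>
    rw [Finset.sum_range_succ, pow_succ]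
    have h1 : d L * b ^ L ≤ (b - 1) * b ^ L :=
      Nat.mul_le_mul_right _ (by have := hd L; omega)
    have h2 : b ^ L * b = b ^ L + (b - 1) * b ^ L := by
      have hb' : b = 1 + (b - 1) := by omega
      calc b ^ L * b = b ^ L * (1 + (b - 1)) := by rw [← hb']
        _ = b ^ L + (b - 1) * b ^ L := by ring
    omega

lemma digit_extract (b : ℕ) (hb : 0 < b) (d : ℕ → ℕ) (hd : ∀ l, d l < b)
    (L k : ℕ) (hk : k < L) :
    (∑ l ∈ range L, d l * b ^ l) / b ^ k % b = d k := by
  obtain ⟨m, hLk⟩ : ∃ m, L - k = m + 1 := ⟨L - k - 1, by omega⟩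
  have hsplit : ∑ l ∈ range L, d l * b ^ l
      = (∑ l ∈ range k, d l * b ^ l)
        + b ^ k * (d k + b * ∑ l ∈ range m, d (k + 1 + l) * b ^ l) := by
    rw [← Finset.sum_range_add_sum_Ico _ (le_of_lt hk)]
    congr 1
    rw [Finset.sum_Ico_eq_sum_range, hLk, Finset.sum_range_succ']
    have hS : ∑ l ∈ range m, d (k + (l + 1)) * b ^ (k + (l + 1))
        = ∑ l ∈ range m, (b ^ k * b) * (d (k + 1 + l) * b ^ l) := by
      refine Finset.sum_congr rfl (fun l _ => ?_)
      rw [show k + (l + 1) = k + 1 + l by omega, pow_add]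
      ring
    rw [hS, ← Finset.mul_sum]
    simp only [Nat.add_zero, pow_zero, mul_one]
    ring
  rw [hsplit]
  have hlow : ∑ l ∈ range k, d l * b ^ l < b ^ k := sum_digits_lt b hb d k hd
  have hbk : 0 < b ^ k := Nat.pow_pos hb
  rw [Nat.add_mul_div_left _ _ hbk, Nat.div_eq_of_lt hlow, Nat.zero_add,
    Nat.add_mul_mod_self_left, Nat.mod_eq_of_lt (hd k)]

lemma reconstruct (b : ℕ) (hb : 0 < b) (L m : ℕ) (hm : m < b ^ L) :
    ∑ l ∈ range L, (m / b ^ l % b) * b ^ l = m := by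
  induction L generalizing m with
  | zero => simp at hm ⊢; omega
  | succ L ih =>
    rw [Finset.sum_range_succ']
    have h1 : ∀ l, m / b ^ (l + 1) % b * b ^ (l + 1) = b * ((m / b) / b ^ l % b * b ^ l) := by
      intro l
      have h2 : m / b ^ (l + 1) = m / b / b ^ l := by
        rw [Nat.div_div_eq_div_mul, pow_succ']
      rw [h2, pow_succ']
      ring
    simp only [h1]
    rw [← Finset.mul_sum, ih (m / b) (by
      rw [Nat.div_lt_iff_lt_mul hb]
      rw [pow_succ] at hm
      exact hm)]
    simpa using Nat.div_add_mod m b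




/-- digit `l` of `m` in base `b` -/
def dig (b m l : ℕ) : ℕ := m / b ^ l % b

lemma dig_lt {b : ℕ} (hb : 0 < b) (m l : ℕ) : dig b m l < b := Nat.mod_lt _ hb

lemma dig2_lt (m l : ℕ) : dig 2 m l < 2 := dig_lt (by norm_num) m l
lemma dig3_lt (m l : ℕ) : dig 3 m l < 3 := dig_lt (by norm_num) m l

/-- per-symbol encoder: digits of `m` in base `b`, scaled by `co`, sent on base-8 levels -/
def esym (co b L m : ℕ) : ℕ := ∑ l ∈ range L, (co * dig b m l) * 8 ^ l

lemma esym_lt {co b : ℕ} (L m : ℕ) (h : ∀ l, co * dig b m l < 8) : esym co b L m < 8 ^ L :=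
  sum_digits_lt 8 (by norm_num) _ L h

lemma esym_zero (co b L : ℕ) : esym co b L 0 = 0 := by
  simp [esym, dig]

lemma dig_reconstruct {b : ℕ} (hb : 0 < b) {L m m' : ℕ} (hm : m < b ^ L) (hm' : m' < b ^ L)
    (h : ∀ k < L, dig b m k = dig b m' k) : m = m' := by
  rw [← reconstruct b hb L m hm, ← reconstruct b hb L m' hm']
  exact Finset.sum_congr rfl (fun l hl => by
    rw [show m / b ^ l % b = dig b m l from rfl, show m' / b ^ l % b = dig b m' l from rfl,
      h l (Finset.mem_range.mp hl)])

lemma det3 {L c c' : ℕ} (hc : c < 2 ^ L) (hc' : c' < 2 ^ L)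
    (h : esym 2 2 L c = esym 2 2 L c') : c = c' := by
  refine dig_reconstruct (by norm_num) hc hc' (fun k hk => ?_)
  have e1 : esym 2 2 L c / 8 ^ k % 8 = 2 * dig 2 c k :=
    digit_extract 8 (by norm_num) _ (fun l => by have := dig2_lt c l; omega) L k hk
  have e2 : esym 2 2 L c' / 8 ^ k % 8 = 2 * dig 2 c' k :=
    digit_extract 8 (by norm_num) _ (fun l => by have := dig2_lt c' l; omega) L k hk
  rw [h, e2] at e1
  omega

lemma det2 {L b b' c c' : ℕ} (hb : b < 3 ^ L) (hb' : b' < 3 ^ L)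
    (h : 2 * esym 2 3 L b + esym 2 2 L c = 2 * esym 2 3 L b' + esym 2 2 L c') : b = b' := by
  have key : ∀ (u v : ℕ), 2 * esym 2 3 L u + esym 2 2 L v
      = 2 * ∑ l ∈ range L, (2 * dig 3 u l + dig 2 v l) * 8 ^ l := by
    intro u v
    rw [esym, esym, Finset.mul_sum, Finset.mul_sum, ← Finset.sum_add_distrib]
    exact Finset.sum_congr rfl (fun l _ => by ring)
  rw [key, key] at h
  have h2 : ∑ l ∈ range L, (2 * dig 3 b l + dig 2 c l) * 8 ^ l
      = ∑ l ∈ range L, (2 * dig 3 b' l + dig 2 c' l) * 8 ^ l := by omega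
  refine dig_reconstruct (by norm_num) hb hb' (fun k hk => ?_)
  have e1 : (∑ l ∈ range L, (2 * dig 3 b l + dig 2 c l) * 8 ^ l) / 8 ^ k % 8
      = 2 * dig 3 b k + dig 2 c k :=
    digit_extract 8 (by norm_num) _
      (fun l => by have := dig3_lt b l; have := dig2_lt c l; omega) L k hk
  have e2 : (∑ l ∈ range L, (2 * dig 3 b' l + dig 2 c' l) * 8 ^ l) / 8 ^ k % 8
      = 2 * dig 3 b' k + dig 2 c' k :=
    digit_extract 8 (by norm_num) _
      (fun l => by have := dig3_lt b' l; have := dig2_lt c' l; omega) L k hk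
  rw [h2, e2] at e1
  have := dig2_lt c k
  have := dig2_lt c' k
  omega

lemma det1 {L a a' b b' c c' : ℕ} (ha : a < 2 ^ L) (ha' : a' < 2 ^ L)
    (h : esym 1 2 L a + esym 2 3 L b + esym 2 2 L c
       = esym 1 2 L a' + esym 2 3 L b' + esym 2 2 L c') : a = a' := by
  have key : ∀ (u v w : ℕ), esym 1 2 L u + esym 2 3 L v + esym 2 2 L w
      = ∑ l ∈ range L, (dig 2 u l + 2 * dig 3 v l + 2 * dig 2 w l) * 8 ^ l := by
    intro u v w
    rw [esym, esym, esym, ← Finset.sum_add_distrib, ← Finset.sum_add_distrib]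
    exact Finset.sum_congr rfl (fun l _ => by ring)
  rw [key, key] at h
  refine dig_reconstruct (by norm_num) ha ha' (fun k hk => ?_)
  have e1 : (∑ l ∈ range L, (dig 2 a l + 2 * dig 3 b l + 2 * dig 2 c l) * 8 ^ l) / 8 ^ k % 8
      = dig 2 a k + 2 * dig 3 b k + 2 * dig 2 c k :=
    digit_extract 8 (by norm_num) _
      (fun l => by have := dig2_lt a l; have := dig3_lt b l; have := dig2_lt c l; omega) L k hk
  have e2 : (∑ l ∈ range L, (dig 2 a' l + 2 * dig 3 b' l + 2 * dig 2 c' l) * 8 ^ l) / 8 ^ k % 8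
      = dig 2 a' k + 2 * dig 3 b' k + 2 * dig 2 c' k :=
    digit_extract 8 (by norm_num) _
      (fun l => by have := dig2_lt a' l; have := dig3_lt b' l; have := dig2_lt c' l; omega) L k hk
  rw [h, e2] at e1
  have := dig2_lt a k
  have := dig2_lt a' k
  omega




noncomputable section

def Hm : Matrix (Fin 3) (Fin 3) ℝ := !![1, 0, 0; 1, 2, 0; 1, 1, 1]

def rateVec (L : ℕ) (δ : ℝ) : Fin 3 → ℝ :=
  ![(L : ℝ), (L : ℝ) * Real.logb 2 3 - δ, (L : ℝ)]

def Bv : Fin 3 → ℕ := ![2, 3, 2]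
def coefv : Fin 3 → ℕ := ![1, 2, 2]

lemma nMsg_pos (n : ℕ) (R : ℝ) : 0 < nMsg n R := Nat.pow_pos (by norm_num)

/-- the encoders -/
def detEnc (L : ℕ) (δ : ℝ) (n : ℕ) (j : Fin 3) :
    Fin (nMsg n (rateVec L δ j)) → Fin n → ℤ := fun w t =>
  if h : nMsg n (rateVec L δ j) ≤ (Bv j ^ L) ^ n then
    (esym (coefv j) (Bv j) L ((finFunctionFinEquiv.symm (Fin.castLE h w)) t : ℕ) : ℤ)
  else 0

/-- the decoders -/
def detDec (L : ℕ) (δ : ℝ) (n : ℕ) (i : Fin 3) :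
    (Fin n → ℝ) → Fin (nMsg n (rateVec L δ i)) := fun y =>
  if h : ∃ w : (j : Fin 3) → Fin (nMsg n (rateVec L δ j)),
      (fun t => ∑ j, Hm j i * ((detEnc L δ n j (w j) t : ℤ) : ℝ)) = y
  then h.choose i else ⟨0, nMsg_pos n _⟩

def detSch (L : ℕ) (δ : ℝ) (n : ℕ) : DetScheme 3 n (rateVec L δ) :=
  ⟨detEnc L δ n, detDec L δ n⟩

lemma coefdig_lt (j : Fin 3) (m l : ℕ) : coefv j * dig (Bv j) m l < 8 := by
  fin_cases j
  · have := dig2_lt m l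
    simp only [coefv, Bv]
    norm_num
    omega
  · have := dig3_lt m l
    simp only [coefv, Bv]
    norm_num
    omega
  · have := dig2_lt m l
    simp only [coefv, Bv]
    norm_num
    omega

lemma detEnc_bounds (L : ℕ) (δ : ℝ) (n : ℕ) (j : Fin 3) (w : Fin (nMsg n (rateVec L δ j)))
    (t : Fin n) : 0 ≤ detEnc L δ n j w t ∧ detEnc L δ n j w t ≤ (8 : ℤ) ^ L := by
  unfold detEnc
  split
  · constructor
    · positivity
    · have := esym_lt (co := coefv j) (b := Bv j) L
        ((finFunctionFinEquiv.symm (Fin.castLE (by assumption) w)) t : ℕ)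
        (fun l => coefdig_lt j _ l)
      exact_mod_cast this.le
  · exact ⟨le_refl 0, by positivity⟩

lemma powerOK (L : ℕ) (δ : ℝ) (n : ℕ) :
    (detSch L δ n).PowerOK (fun _ => (8 : ℝ) ^ (2 * L)) := by
  intro i w
  have hterm : ∀ t : Fin n, ((detSch L δ n).enc i w t : ℝ) ^ 2 ≤ (8 : ℝ) ^ (2 * L) := by
    intro t
    obtain ⟨h0, h1⟩ := detEnc_bounds L δ n i w t
    have h0' : (0 : ℝ) ≤ ((detSch L δ n).enc i w t : ℝ) := by exact_mod_cast h0
    have h1' : ((detSch L δ n).enc i w t : ℝ) ≤ (8 : ℝ) ^ L := by exact_mod_cast h1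
    have : ((detSch L δ n).enc i w t : ℝ) ^ 2 ≤ ((8 : ℝ) ^ L) ^ 2 := by
      apply pow_le_pow_left₀ h0' h1'
    rwa [← pow_mul, Nat.mul_comm] at this
  calc ∑ t, ((detSch L δ n).enc i w t : ℝ) ^ 2
      ≤ (Finset.univ : Finset (Fin n)).card • ((8 : ℝ) ^ (2 * L)) :=
        Finset.sum_le_card_nsmul _ _ _ (fun t _ => hterm t)
    _ = (n : ℝ) * (8 : ℝ) ^ (2 * L) := by
        rw [Finset.card_univ, Fintype.card_fin, nsmul_eq_mul]

end



noncomputable section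

lemma nMsg_natRate (n m : ℕ) : nMsg n (m : ℝ) = 2 ^ (n * m) := by
  unfold nMsg
  congr 1
  rw [show ((n : ℝ) * (m : ℝ)) = ((n * m : ℕ) : ℝ) by push_cast; ring,
    Int.ceil_natCast]
  omega

lemma cond0 (L : ℕ) (δ : ℝ) (n : ℕ) : nMsg n (rateVec L δ 0) ≤ (Bv 0 ^ L) ^ n := by
  have : rateVec L δ 0 = ((L : ℕ) : ℝ) := rfl
  rw [this, nMsg_natRate, ← pow_mul, Nat.mul_comm]
  exact le_refl _

lemma cond2 (L : ℕ) (δ : ℝ) (n : ℕ) : nMsg n (rateVec L δ 2) ≤ (Bv 2 ^ L) ^ n := by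
  have : rateVec L δ 2 = ((L : ℕ) : ℝ) := rfl
  rw [this, nMsg_natRate, ← pow_mul, Nat.mul_comm]
  exact le_refl _

lemma cond1 (L : ℕ) (δ : ℝ) (n : ℕ) (hn : 1 ≤ δ * n) :
    nMsg n (rateVec L δ 1) ≤ (Bv 1 ^ L) ^ n := by
  have hBv : Bv 1 = 3 := rfl
  have hr : rateVec L δ 1 = (L : ℝ) * Real.logb 2 3 - δ := rfl
  rw [hBv, hr]
  unfold nMsg
  set x := (n : ℝ) * ((L : ℝ) * Real.logb 2 3 - δ) with hx
  rcases le_or_gt ⌈x⌉ 0 with h | h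
  · rw [Int.toNat_of_nonpos h]
    rw [pow_zero]; exact Nat.pow_pos (Nat.pow_pos (by norm_num))
  · have hk : ((⌈x⌉.toNat : ℕ) : ℝ) ≤ ((n * L : ℕ) : ℝ) * Real.logb 2 3 := by
      have h1 : ((⌈x⌉.toNat : ℕ) : ℝ) = ((⌈x⌉ : ℤ) : ℝ) := by
        exact_mod_cast congrArg (fun z : ℤ => (z : ℝ)) (Int.toNat_of_nonneg h.le)
      have h2 : ((⌈x⌉ : ℤ) : ℝ) < x + 1 := Int.ceil_lt_add_one x
      have h3 : x + 1 ≤ ((n * L : ℕ) : ℝ) * Real.logb 2 3 := by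
        rw [hx]
        push_cast
        nlinarith [hn]
      rw [h1]
      linarith
  -- now 2 ^ k ≤ 3 ^ (n*L) = (3^L)^n
    have key : ((2 : ℕ) ^ ⌈x⌉.toNat : ℝ) ≤ ((3 : ℕ) ^ (n * L) : ℝ) := by
      push_cast
      calc ((2 : ℝ) ^ (⌈x⌉.toNat : ℕ)) = (2 : ℝ) ^ ((⌈x⌉.toNat : ℕ) : ℝ) := by
            rw [Real.rpow_natCast]
        _ ≤ (2 : ℝ) ^ (((n * L : ℕ) : ℝ) * Real.logb 2 3) :=
            Real.rpow_le_rpow_of_exponent_le (by norm_num) hk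
        _ = (2 : ℝ) ^ (Real.logb 2 3 * ((n * L : ℕ) : ℝ)) := by rw [mul_comm]
        _ = ((2 : ℝ) ^ Real.logb 2 3) ^ (((n * L : ℕ)) : ℝ) := by
            rw [Real.rpow_mul (by norm_num)]
        _ = (3 : ℝ) ^ (((n * L : ℕ)) : ℝ) := by
            rw [Real.rpow_logb (by norm_num) (by norm_num) (by norm_num)]
        _ = (3 : ℝ) ^ ((n * L : ℕ)) := Real.rpow_natCast _ _
    have key2 : (2 : ℕ) ^ ⌈x⌉.toNat ≤ (3 : ℕ) ^ (n * L) := by exact_mod_cast key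
    calc (2 : ℕ) ^ ⌈x⌉.toNat ≤ 3 ^ (n * L) := key2
      _ = (3 ^ L) ^ n := by rw [← pow_mul, Nat.mul_comm]

end



noncomputable section

def mdig (L : ℕ) (δ : ℝ) (n : ℕ) (j : Fin 3) (h : nMsg n (rateVec L δ j) ≤ (Bv j ^ L) ^ n)
    (w : Fin (nMsg n (rateVec L δ j))) : Fin n → Fin (Bv j ^ L) :=
  finFunctionFinEquiv.symm (Fin.castLE h w)

lemma enc_eval {L : ℕ} {δ : ℝ} {n : ℕ} {j : Fin 3} (h : nMsg n (rateVec L δ j) ≤ (Bv j ^ L) ^ n)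
    (w : Fin (nMsg n (rateVec L δ j))) (t : Fin n) :
    detEnc L δ n j w t = (esym (coefv j) (Bv j) L (mdig L δ n j h w t : ℕ) : ℤ) := by
  unfold detEnc mdig
  rw [dif_pos h]

lemma enc_zero {L : ℕ} {δ : ℝ} {n : ℕ} {j : Fin 3} (h : ¬ nMsg n (rateVec L δ j) ≤ (Bv j ^ L) ^ n)
    (w : Fin (nMsg n (rateVec L δ j))) (t : Fin n) : detEnc L δ n j w t = 0 := by
  unfold detEnc
  rw [dif_neg h]

lemma mdig_inj {L : ℕ} {δ : ℝ} {n : ℕ} {j : Fin 3} (h : nMsg n (rateVec L δ j) ≤ (Bv j ^ L) ^ n)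
    {w w' : Fin (nMsg n (rateVec L δ j))}
    (he : ∀ t, (mdig L δ n j h w t : ℕ) = (mdig L δ n j h w' t : ℕ)) : w = w' := by
  have h1 : mdig L δ n j h w = mdig L δ n j h w' := funext fun t => Fin.ext (he t)
  unfold mdig at h1
  exact Fin.castLE_injective h (finFunctionFinEquiv.symm.injective h1)

lemma determine0 (L : ℕ) (δ : ℝ) (n : ℕ)
    (w w' : (j : Fin 3) → Fin (nMsg n (rateVec L δ j)))
    (h : (fun t => ∑ j, Hm j 0 * ((detEnc L δ n j (w j) t : ℤ) : ℝ))
       = (fun t => ∑ j, Hm j 0 * ((detEnc L δ n j (w' j) t : ℤ) : ℝ))) : w 0 = w' 0 := by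
  have h0 := cond0 L δ n
  have h2' := cond2 L δ n
  refine mdig_inj h0 (w := w 0) (w' := w' 0) (fun t => ?_)
  have ht := congrFun h t
  simp only [Fin.sum_univ_three] at ht
  rw [show Hm 0 0 = 1 from rfl, show Hm 1 0 = 1 from rfl, show Hm 2 0 = 1 from rfl] at ht
  simp only [one_mul] at ht
  by_cases h1 : nMsg n (rateVec L δ 1) ≤ (Bv 1 ^ L) ^ n
  · rw [enc_eval h0, enc_eval h1, enc_eval h2', enc_eval h0, enc_eval h1, enc_eval h2'] at ht
    have htn : esym (coefv 0) (Bv 0) L (mdig L δ n 0 h0 (w 0) t : ℕ)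
        + esym (coefv 1) (Bv 1) L (mdig L δ n 1 h1 (w 1) t : ℕ)
        + esym (coefv 2) (Bv 2) L (mdig L δ n 2 h2' (w 2) t : ℕ)
        = esym (coefv 0) (Bv 0) L (mdig L δ n 0 h0 (w' 0) t : ℕ)
        + esym (coefv 1) (Bv 1) L (mdig L δ n 1 h1 (w' 1) t : ℕ)
        + esym (coefv 2) (Bv 2) L (mdig L δ n 2 h2' (w' 2) t : ℕ) := by exact_mod_cast ht
    exact det1 (Fin.is_lt _) (Fin.is_lt _) htn
  · rw [enc_eval h0, enc_zero h1, enc_eval h2', enc_eval h0, enc_zero h1, enc_eval h2'] at ht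
    have htn : esym (coefv 0) (Bv 0) L (mdig L δ n 0 h0 (w 0) t : ℕ)
        + esym (coefv 2) (Bv 2) L (mdig L δ n 2 h2' (w 2) t : ℕ)
        = esym (coefv 0) (Bv 0) L (mdig L δ n 0 h0 (w' 0) t : ℕ)
        + esym (coefv 2) (Bv 2) L (mdig L δ n 2 h2' (w' 2) t : ℕ) := by
      push_cast at ht
      exact_mod_cast ht
    refine det1 (b := 0) (b' := 0) (c := (mdig L δ n 2 h2' (w 2) t : ℕ))
      (c' := (mdig L δ n 2 h2' (w' 2) t : ℕ)) (Fin.is_lt _) (Fin.is_lt _) ?_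
    rw [esym_zero]
    show esym (coefv 0) (Bv 0) L (mdig L δ n 0 h0 (w 0) t : ℕ) + 0
        + esym (coefv 2) (Bv 2) L (mdig L δ n 2 h2' (w 2) t : ℕ)
      = esym (coefv 0) (Bv 0) L (mdig L δ n 0 h0 (w' 0) t : ℕ) + 0
        + esym (coefv 2) (Bv 2) L (mdig L δ n 2 h2' (w' 2) t : ℕ)
    omega

lemma determine1 (L : ℕ) (δ : ℝ) (n : ℕ)
    (h1 : nMsg n (rateVec L δ 1) ≤ (Bv 1 ^ L) ^ n)
    (w w' : (j : Fin 3) → Fin (nMsg n (rateVec L δ j)))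
    (h : (fun t => ∑ j, Hm j 1 * ((detEnc L δ n j (w j) t : ℤ) : ℝ))
       = (fun t => ∑ j, Hm j 1 * ((detEnc L δ n j (w' j) t : ℤ) : ℝ))) : w 1 = w' 1 := by
  have h2' := cond2 L δ n
  refine mdig_inj h1 (w := w 1) (w' := w' 1) (fun t => ?_)
  have ht := congrFun h t
  simp only [Fin.sum_univ_three] at ht
  rw [show Hm 0 1 = 0 from rfl, show Hm 1 1 = 2 from rfl, show Hm 2 1 = 1 from rfl] at ht
  simp only [one_mul, zero_mul, zero_add] at ht
  rw [enc_eval h1, enc_eval h2', enc_eval h1, enc_eval h2'] at ht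
  have htn : 2 * esym (coefv 1) (Bv 1) L (mdig L δ n 1 h1 (w 1) t : ℕ)
      + esym (coefv 2) (Bv 2) L (mdig L δ n 2 h2' (w 2) t : ℕ)
      = 2 * esym (coefv 1) (Bv 1) L (mdig L δ n 1 h1 (w' 1) t : ℕ)
      + esym (coefv 2) (Bv 2) L (mdig L δ n 2 h2' (w' 2) t : ℕ) := by exact_mod_cast ht
  exact det2 (Fin.is_lt _) (Fin.is_lt _) htn

lemma determine2 (L : ℕ) (δ : ℝ) (n : ℕ)
    (w w' : (j : Fin 3) → Fin (nMsg n (rateVec L δ j)))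
    (h : (fun t => ∑ j, Hm j 2 * ((detEnc L δ n j (w j) t : ℤ) : ℝ))
       = (fun t => ∑ j, Hm j 2 * ((detEnc L δ n j (w' j) t : ℤ) : ℝ))) : w 2 = w' 2 := by
  have h2' := cond2 L δ n
  refine mdig_inj h2' (w := w 2) (w' := w' 2) (fun t => ?_)
  have ht := congrFun h t
  simp only [Fin.sum_univ_three] at ht
  rw [show Hm 0 2 = 0 from rfl, show Hm 1 2 = 0 from rfl, show Hm 2 2 = 1 from rfl] at ht
  simp only [one_mul, zero_mul, zero_add] at ht
  rw [enc_eval h2', enc_eval h2'] at ht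
  have htn : esym (coefv 2) (Bv 2) L (mdig L δ n 2 h2' (w 2) t : ℕ)
      = esym (coefv 2) (Bv 2) L (mdig L δ n 2 h2' (w' 2) t : ℕ) := by exact_mod_cast ht
  exact det3 (Fin.is_lt _) (Fin.is_lt _) htn

end



noncomputable section

lemma dec_correct (L : ℕ) (δ : ℝ) (n : ℕ) (i : Fin 3)
    (hc : i = 1 → nMsg n (rateVec L δ 1) ≤ (Bv 1 ^ L) ^ n)
    (w : (j : Fin 3) → Fin (nMsg n (rateVec L δ j))) :
    detDec L δ n i (fun t => ∑ j, Hm j i * ((detEnc L δ n j (w j) t : ℤ) : ℝ)) = w i := by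
  unfold detDec
  have hex : ∃ w' : (j : Fin 3) → Fin (nMsg n (rateVec L δ j)),
      (fun t => ∑ j, Hm j i * ((detEnc L δ n j (w' j) t : ℤ) : ℝ))
      = (fun t => ∑ j, Hm j i * ((detEnc L δ n j (w j) t : ℤ) : ℝ)) := ⟨w, rfl⟩
  rw [dif_pos hex]
  have hspec := hex.choose_spec
  fin_cases i
  · exact determine0 L δ n _ w hspec
  · exact determine1 L δ n (hc rfl) _ w hspec
  · exact determine2 L δ n _ w hspec

lemma errProb_zero (L : ℕ) (δ : ℝ) (n : ℕ) (i : Fin 3)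
    (hc : i = 1 → nMsg n (rateVec L δ 1) ≤ (Bv 1 ^ L) ^ n) :
    (detSch L δ n).errProb Hm i = 0 := by
  unfold DetScheme.errProb
  have hempty : (Finset.univ.filter fun w : (j : Fin 3) → Fin (nMsg n (rateVec L δ j)) =>
      (detSch L δ n).dec i (fun t => ∑ j, Hm j i * ((detSch L δ n).enc j (w j) t : ℝ)) ≠ w i)
      = ∅ :=
    Finset.filter_eq_empty_iff.mpr (fun w _ hw => hw (dec_correct L δ n i hc w))
  rw [hempty]
  simp

lemma achieve (L : ℕ) (δ : ℝ) (hδ : 0 < δ) :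
    rateVec L δ ∈ detCapacityRegion 3 Hm (fun _ => (8 : ℝ) ^ (2 * L)) := by
  refine ⟨fun n => detSch L δ n, fun n => powerOK L δ n, fun i => ?_⟩
  by_cases hi : i = 1
  · subst hi
    have hev : (fun n => (detSch L δ n).errProb Hm 1) =ᶠ[atTop] (fun _ => (0 : ℝ)) := by
      rw [Filter.eventuallyEq_iff_exists_mem]
      refine ⟨{n | (⌈1/δ⌉₊ + 1 : ℕ) ≤ n}, Filter.mem_atTop _, fun n hn => ?_⟩
      have hn' : (⌈1/δ⌉₊ + 1 : ℕ) ≤ n := hn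
      have h1 : (1 : ℝ) ≤ δ * n := by
        have h2 : (1/δ : ℝ) ≤ (⌈1/δ⌉₊ : ℕ) := Nat.le_ceil _
        have h3 : ((⌈1/δ⌉₊ : ℕ) : ℝ) ≤ (n : ℝ) := by exact_mod_cast le_trans (Nat.le_succ _) hn'
        have h4 : (1/δ : ℝ) ≤ (n : ℝ) := le_trans h2 h3
        calc (1 : ℝ) = δ * (1/δ) := by field_simp
          _ ≤ δ * n := by
            apply mul_le_mul_of_nonneg_left h4 hδ.le
      exact errProb_zero L δ n 1 (fun _ => cond1 L δ n h1)
    exact (tendsto_const_nhds).congr' hev.symm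
  · have hall : ∀ n, (detSch L δ n).errProb Hm i = 0 :=
      fun n => errProb_zero L δ n i (fun h => absurd h hi)
    simpa [hall] using (tendsto_const_nhds (x := (0:ℝ)) (f := atTop (α := ℕ)))

lemma achieve_sum (L : ℕ) (δ : ℝ) (hδ : 0 < δ) :
    (2 * (L : ℝ) + (L : ℝ) * Real.logb 2 3 - δ)
      ∈ {x | ∃ R ∈ detCapacityRegion 3 Hm (fun _ => (8 : ℝ) ^ (2 * L)), x = ∑ i, R i} := by
  refine ⟨rateVec L δ, achieve L δ hδ, ?_⟩
  rw [Fin.sum_univ_three]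
  show _ = (L : ℝ) + ((L : ℝ) * Real.logb 2 3 - δ) + (L : ℝ)
  ring

end




/-- Counting power-constrained integer codebooks: at most `(16 P)^n` codewords. -/
lemma card_codebook_le {n : ℕ} {P : ℝ} (hP : 1 ≤ P) (A : Finset (Fin n → ℤ))
    (hA : ∀ c ∈ A, ∑ t, ((c t : ℝ)) ^ 2 ≤ n * P) :
    (A.card : ℝ) ≤ (16 * P) ^ n := by
  have hP0 : (0 : ℝ) < P := lt_of_lt_of_le one_pos hP
  have hlog2 : (0.6931471803 : ℝ) < Real.log 2 := Real.log_two_gt_d9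
  set r : ℝ := Real.exp (-(Real.log 2) / P) with hr
  have hr0 : 0 < r := Real.exp_pos _
  have hr1 : r < 1 := by
    rw [hr, Real.exp_lt_one_iff]
    apply div_neg_of_neg_of_pos _ hP0
    linarith
  -- the weight function
  set w : ℤ → ℝ := fun k => r ^ (((k : ℝ)) ^ 2) with hw
  have hw0 : ∀ k, 0 ≤ w k := fun k => (Real.rpow_pos_of_pos hr0 _).le
  -- step (a) : each codeword has weight at least r^(nP)
  have ha : ∀ c ∈ A, (1 : ℝ) ≤ r ^ (-((n : ℝ) * P)) * ∏ t, w (c t) := by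
    intro c hc
    have h1 : ∏ t, w (c t) = r ^ (∑ t, ((c t : ℝ)) ^ 2) := by
      rw [Real.rpow_sum_of_pos hr0]
    rw [h1, ← Real.rpow_add hr0]
    apply Real.one_le_rpow_of_pos_of_le_one_of_nonpos hr0 hr1.le
    have := hA c hc
    linarith
  -- step (b) : bound the cardinality by the total weight
  have hb : (A.card : ℝ) ≤ r ^ (-((n : ℝ) * P)) * ∑ c ∈ A, ∏ t, w (c t) := by
    rw [Finset.mul_sum]
    calc (A.card : ℝ) = ∑ _c ∈ A, (1 : ℝ) := by rw [Finset.sum_const, nsmul_eq_mul, mul_one]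
      _ ≤ ∑ c ∈ A, r ^ (-((n : ℝ) * P)) * ∏ t, w (c t) := Finset.sum_le_sum ha
  -- step (c) : total weight factorizes through a product set
  set K : Finset ℤ := A.biUnion (fun c => Finset.image c Finset.univ) with hK
  have hc : ∑ c ∈ A, ∏ t, w (c t) ≤ (∑ k ∈ K, w k) ^ n := by
    have hsub : A ⊆ Fintype.piFinset (fun _ : Fin n => K) := by
      intro c hc
      rw [Fintype.mem_piFinset]
      intro t
      exact Finset.mem_biUnion.mpr ⟨c, hc, Finset.mem_image_of_mem _ (Finset.mem_univ t)⟩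
    calc ∑ c ∈ A, ∏ t, w (c t)
        ≤ ∑ c ∈ Fintype.piFinset (fun _ : Fin n => K), ∏ t, w (c t) :=
          Finset.sum_le_sum_of_subset_of_nonneg hsub
            (fun c _ _ => Finset.prod_nonneg (fun t _ => hw0 _))
      _ = ∏ _t : Fin n, ∑ k ∈ K, w k := (Finset.prod_univ_sum _ _).symm
      _ = (∑ k ∈ K, w k) ^ n := by rw [Finset.prod_const, Finset.card_univ, Fintype.card_fin]
  -- step (d) : the one-dimensional weight sum is at most 8 P
  have hd : ∑ k ∈ K, w k ≤ 8 * P := by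
    -- bound each weight by a geometric term
    have hd1 : ∀ k : ℤ, w k ≤ r ^ (k.natAbs) := by
      intro k
      have h2 : ((k.natAbs : ℕ) : ℝ) ≤ ((k : ℝ)) ^ 2 := by
        have h3 : ((k : ℝ)) ^ 2 = ((k.natAbs : ℕ) : ℝ) ^ 2 := by
          rw [Nat.cast_natAbs]
          push_cast
          rw [sq_abs]
        rw [h3]
        exact_mod_cast Nat.le_self_pow (by norm_num) k.natAbs
      calc w k ≤ r ^ (((k.natAbs : ℕ) : ℝ)) :=
            Real.rpow_le_rpow_of_exponent_ge hr0 hr1.le h2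
        _ = r ^ (k.natAbs) := Real.rpow_natCast r _
    set J : ℕ := K.sup (fun k => k.natAbs) + 1 with hJ
    have hd2 : K ⊆ (Finset.range J).image (fun j : ℕ => (j : ℤ))
        ∪ (Finset.range J).image (fun j : ℕ => -(j : ℤ)) := by
      intro k hk
      have hkJ : k.natAbs < J := Nat.lt_succ_of_le (Finset.le_sup hk)
      rcases Int.natAbs_eq k with h | h
      · exact Finset.mem_union_left _
          (Finset.mem_image.mpr ⟨k.natAbs, Finset.mem_range.mpr hkJ, h.symm⟩)
      · exact Finset.mem_union_right _
          (Finset.mem_image.mpr ⟨k.natAbs, Finset.mem_range.mpr hkJ, h.symm⟩)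
    have hgeom : ∑ j ∈ Finset.range J, r ^ j ≤ (1 - r)⁻¹ := by
      calc ∑ j ∈ Finset.range J, r ^ j ≤ ∑' j : ℕ, r ^ j :=
            Summable.sum_le_tsum _ (fun i _ => pow_nonneg hr0.le i)
              (summable_geometric_of_lt_one hr0.le hr1)
        _ = (1 - r)⁻¹ := tsum_geometric_of_lt_one hr0.le hr1
    have hsum1 : ∑ k ∈ (Finset.range J).image (fun j : ℕ => (j : ℤ)), r ^ k.natAbs
        = ∑ j ∈ Finset.range J, r ^ j := by
      rw [Finset.sum_image (fun a _ b _ h => by exact_mod_cast h)]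
      simp
    have hsum2 : ∑ k ∈ (Finset.range J).image (fun j : ℕ => -(j : ℤ)), r ^ k.natAbs
        = ∑ j ∈ Finset.range J, r ^ j := by
      rw [Finset.sum_image (fun a _ b _ h => by omega)]
      simp
    have hd3 : ∑ k ∈ K, r ^ k.natAbs ≤ 2 * (1 - r)⁻¹ := by
      have hU := Finset.sum_le_sum_of_subset_of_nonneg hd2
        (fun k _ _ => pow_nonneg hr0.le k.natAbs)
      have hUI := Finset.sum_union_inter (s₁ := (Finset.range J).image (fun j : ℕ => (j : ℤ)))
        (s₂ := (Finset.range J).image (fun j : ℕ => -(j : ℤ))) (f := fun k => r ^ k.natAbs)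
      have hInt : 0 ≤ ∑ k ∈ ((Finset.range J).image (fun j : ℕ => (j : ℤ))
          ∩ (Finset.range J).image (fun j : ℕ => -(j : ℤ))), r ^ k.natAbs :=
        Finset.sum_nonneg (fun k _ => pow_nonneg hr0.le k.natAbs)
      calc ∑ k ∈ K, r ^ k.natAbs
          ≤ ∑ k ∈ ((Finset.range J).image (fun j : ℕ => (j : ℤ))
              ∪ (Finset.range J).image (fun j : ℕ => -(j : ℤ))), r ^ k.natAbs := hU
        _ ≤ ∑ k ∈ (Finset.range J).image (fun j : ℕ => (j : ℤ)), r ^ k.natAbs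
            + ∑ k ∈ (Finset.range J).image (fun j : ℕ => -(j : ℤ)), r ^ k.natAbs := by
              linarith [hUI, hInt]
        _ = 2 * ∑ j ∈ Finset.range J, r ^ j := by rw [hsum1, hsum2]; ring
        _ ≤ 2 * (1 - r)⁻¹ := by linarith [hgeom]
    -- (1 - r)⁻¹ ≤ 4 P
    have hd4 : (1 - r)⁻¹ ≤ 4 * P := by
      have hx : r ≤ 1 / (1 + Real.log 2 / P) := by
        have h5 : 1 + Real.log 2 / P ≤ Real.exp (Real.log 2 / P) := by
          have := Real.add_one_le_exp (Real.log 2 / P)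
          linarith
        have h6 : r = (Real.exp (Real.log 2 / P))⁻¹ := by
          rw [hr, ← Real.exp_neg]
          ring_nf
        rw [h6, one_div]
        apply inv_anti₀ _ h5
        positivity
      have h7 : Real.log 2 / (P + Real.log 2) ≤ 1 - r := by
        have h8 : 1 - 1 / (1 + Real.log 2 / P) = (Real.log 2 / P) / (1 + Real.log 2 / P) := by
          field_simp
          ring
        have h9 : (Real.log 2 / P) / (1 + Real.log 2 / P) = Real.log 2 / (P + Real.log 2) := by
          have hP' : P ≠ 0 := by positivity
          have hden : (0:ℝ) < P + Real.log 2 := by linarith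
          field_simp
        nlinarith [hx, h8, h9]
      have h10 : 0 < Real.log 2 / (P + Real.log 2) := by positivity
      have h11 : (1 - r)⁻¹ ≤ (Real.log 2 / (P + Real.log 2))⁻¹ := by
        apply inv_anti₀ h10 h7
      have h12 : (Real.log 2 / (P + Real.log 2))⁻¹ = (P + Real.log 2) / Real.log 2 := by
        rw [inv_div]
      have h13 : (P + Real.log 2) / Real.log 2 ≤ 4 * P := by
        rw [div_le_iff₀ (by linarith)]
        have hl1 : Real.log 2 < 1 := by
          have := Real.log_lt_sub_one_of_pos (by norm_num : (0:ℝ) < 2) (by norm_num)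
          linarith
        nlinarith
      linarith
    calc ∑ k ∈ K, w k ≤ ∑ k ∈ K, r ^ k.natAbs := Finset.sum_le_sum (fun k _ => hd1 k)
      _ ≤ 2 * (1 - r)⁻¹ := hd3
      _ ≤ 8 * P := by linarith
  -- step (e) : the prefactor is 2^n
  have he : r ^ (-((n : ℝ) * P)) = 2 ^ n := by
    rw [hr, ← Real.exp_log (by norm_num : (0:ℝ) < 2)]
    rw [Real.rpow_def_of_pos (Real.exp_pos _), Real.log_exp]
    rw [← Real.exp_nat_mul]
    congr 1
    field_simp
    rw [Real.log_exp]
    ring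
  -- put everything together
  have hfinal : (A.card : ℝ) ≤ 2 ^ n * (8 * P) ^ n := by
    have h14 : ∑ c ∈ A, ∏ t, w (c t) ≤ (8 * P) ^ n := by
      calc ∑ c ∈ A, ∏ t, w (c t) ≤ (∑ k ∈ K, w k) ^ n := hc
        _ ≤ (8 * P) ^ n := by
            apply pow_le_pow_left₀ _ hd
            exact Finset.sum_nonneg (fun k _ => hw0 k)
    calc (A.card : ℝ) ≤ r ^ (-((n : ℝ) * P)) * ∑ c ∈ A, ∏ t, w (c t) := hb
      _ = 2 ^ n * ∑ c ∈ A, ∏ t, w (c t) := by rw [he]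
      _ ≤ 2 ^ n * (8 * P) ^ n := by
          apply mul_le_mul_of_nonneg_left h14 (by positivity)
  calc (A.card : ℝ) ≤ 2 ^ n * (8 * P) ^ n := hfinal
    _ = (16 * P) ^ n := by rw [← mul_pow]; ring_nf



lemma err_lb {n : ℕ} {R : Fin 3 → ℝ} (s : DetScheme 3 n R)
    (H : Matrix (Fin 3) (Fin 3) ℝ) (i : Fin 3) :
    1 - ((Finset.image (s.enc i) Finset.univ).card : ℝ) / (nMsg n (R i) : ℝ)
      ≤ s.errProb H i := by
  classical
  set A := Finset.image (s.enc i) Finset.univ with hA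
  set Ms := fun j => nMsg n (R j) with hMs
  have hMpos : ∀ j, 0 < Ms j := fun j => Nat.pow_pos (by norm_num)
  set p : ((j : Fin 3) → Fin (nMsg n (R j))) → Prop :=
    fun w => s.dec i (fun t => ∑ j, H j i * ((s.enc j (w j) t : ℤ) : ℝ)) = w i with hp
  have hcards : (Finset.univ.filter p).card
      + (Finset.univ.filter (fun w => ¬ p w)).card = ∏ j, Ms j := by
    rw [Finset.card_filter_add_card_filter_not, Finset.card_univ]
    rw [Fintype.card_pi]
    exact Finset.prod_congr rfl (fun j _ => Fintype.card_fin _)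
  -- the good set injects into (messages fixed at i) × codewords
  set d0 : (j : Fin 3) → Fin (nMsg n (R j)) := fun j => ⟨0, hMpos j⟩ with hd0
  set T1 := Fintype.piFinset (fun j => if j = i then {d0 j} else Finset.univ) with hT1
  have hgood : (Finset.univ.filter p).card ≤ T1.card * A.card := by
    rw [← Finset.card_product]
    apply Finset.card_le_card_of_injOn
      (fun w => (Function.update w i (d0 i), s.enc i (w i)))
    · intro w _
      rw [Finset.mem_coe, Finset.mem_product]
      constructor
      · rw [Fintype.mem_piFinset]
        intro j
        by_cases hj : j = i
        · subst hj
          show Function.update w j (d0 j) j ∈ _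
          simp [Function.update_self]
        · show Function.update w i (d0 i) j ∈ _
          simp [Function.update_of_ne hj, if_neg hj]
      · exact Finset.mem_image_of_mem _ (Finset.mem_univ _)
    · intro w hw w' hw' heq
      simp only [Finset.coe_filter, Set.mem_setOf_eq] at hw hw'
      have h1 : Function.update w i (d0 i) = Function.update w' i (d0 i) :=
        congrArg Prod.fst heq
      have h2 : s.enc i (w i) = s.enc i (w' i) := congrArg Prod.snd heq
      have hne : ∀ j, j ≠ i → w j = w' j := by
        intro j hj
        have := congrFun h1 j
        rwa [Function.update_of_ne hj, Function.update_of_ne hj] at this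
      have hy : (fun t => ∑ j, H j i * ((s.enc j (w j) t : ℤ) : ℝ))
          = (fun t => ∑ j, H j i * ((s.enc j (w' j) t : ℤ) : ℝ)) := by
        funext t
        apply Finset.sum_congr rfl
        intro j _
        by_cases hj : j = i
        · subst hj
          rw [h2]
        · rw [hne j hj]
      have hwi : w i = w' i := by
        have hgw := hw.2
        have hgw' := hw'.2
        rw [hp] at hgw hgw'
        rw [← hgw, ← hgw', hy]
      funext j
      by_cases hj : j = i
      · subst hj; exact hwi
      · exact hne j hj
  have hT1card : T1.card * Ms i = ∏ j, Ms j := by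
    rw [hT1, Fintype.card_piFinset]
    have h3 : ∀ j : Fin 3, ((if j = i then ({d0 j} : Finset (Fin (nMsg n (R j)))) else
        Finset.univ)).card = if j = i then 1 else Ms j := by
      intro j
      by_cases hj : j = i
      · rw [if_pos hj, if_pos hj, Finset.card_singleton]
      · rw [if_neg hj, if_neg hj, Finset.card_univ, Fintype.card_fin]
    simp only [h3]
    rw [← Finset.mul_prod_erase Finset.univ _ (Finset.mem_univ i), if_pos rfl, one_mul]
    rw [← Finset.mul_prod_erase Finset.univ Ms (Finset.mem_univ i)]
    rw [mul_comm]
    congr 1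
    exact Finset.prod_congr rfl
      (fun j hj => by rw [if_neg (Finset.ne_of_mem_erase hj)])
  -- conclude
  unfold DetScheme.errProb
  have hNpos : (0 : ℝ) < ∏ j, (Ms j : ℝ) :=
    Finset.prod_pos (fun j _ => by exact_mod_cast hMpos j)
  have hprodcast : (∏ j, (Ms j : ℝ)) = ((∏ j, Ms j : ℕ) : ℝ) := by push_cast; rfl
  have hbadlb : ((∏ j, Ms j : ℕ) : ℝ) - (T1.card * A.card : ℕ)
      ≤ ((Finset.univ.filter (fun w => ¬ p w)).card : ℝ) := by
    have := hcards
    have hg := hgood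
    have h4 : ((Finset.univ.filter p).card : ℝ) ≤ ((T1.card * A.card : ℕ) : ℝ) := by
      exact_mod_cast hgood
    have h5 : ((Finset.univ.filter p).card : ℝ)
        + ((Finset.univ.filter (fun w => ¬ p w)).card : ℝ) = ((∏ j, Ms j : ℕ) : ℝ) := by
      exact_mod_cast hcards
    linarith
  have hdiv : 1 - (A.card : ℝ) / (Ms i : ℝ)
      ≤ ((Finset.univ.filter (fun w => ¬ p w)).card : ℝ) / ∏ j, (Ms j : ℝ) := by
    rw [hprodcast]
    have hNpos' : (0 : ℝ) < ((∏ j, Ms j : ℕ) : ℝ) := by rw [← hprodcast]; exact hNpos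
    rw [le_div_iff₀ hNpos']
    have hkey : (1 - (A.card : ℝ) / (Ms i : ℝ)) * ((∏ j, Ms j : ℕ) : ℝ)
        = ((∏ j, Ms j : ℕ) : ℝ) - (A.card : ℝ) * (((∏ j, Ms j : ℕ) : ℝ) / (Ms i : ℝ)) := by
      ring
    have hMi : ((∏ j, Ms j : ℕ) : ℝ) / (Ms i : ℝ) = (T1.card : ℝ) := by
      rw [div_eq_iff (by exact_mod_cast (hMpos i).ne' : (Ms i : ℝ) ≠ 0)]
      exact_mod_cast hT1card.symm
    rw [hkey, hMi]
    have : ((T1.card * A.card : ℕ) : ℝ) = (A.card : ℝ) * (T1.card : ℝ) := by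
      push_cast; ring
    linarith [hbadlb]
  exact hdiv



lemma rate_bound {P : ℝ} (hP : 1 ≤ P) {H : Matrix (Fin 3) (Fin 3) ℝ} {R : Fin 3 → ℝ}
    (hR : R ∈ detCapacityRegion 3 H (fun _ => P)) (i : Fin 3) :
    R i ≤ Real.logb 2 (32 * P) := by
  by_contra hlt
  push_neg at hlt
  obtain ⟨s, hpow, herr⟩ := hR
  have hP0 : (0 : ℝ) < P := lt_of_lt_of_le one_pos hP
  have key : ∀ n : ℕ, 1 ≤ n → (1/2 : ℝ) ≤ (s n).errProb H i := by
    intro n hn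
    set A := Finset.image ((s n).enc i) Finset.univ with hA
    have hcb : (A.card : ℝ) ≤ (16 * P) ^ n := by
      apply card_codebook_le hP
      intro c hc
      obtain ⟨w, _, rfl⟩ := Finset.mem_image.mp hc
      exact hpow n i w
    have hN : ((32 * P) : ℝ) ^ n ≤ (nMsg n (R i) : ℝ) := by
      have h1 : ((32 * P) : ℝ) ^ n = (2 : ℝ) ^ (Real.logb 2 (32 * P) * n) := by
        rw [Real.rpow_mul (by norm_num), Real.rpow_logb (by norm_num) (by norm_num)
          (by positivity), Real.rpow_natCast]
      have h2 : Real.logb 2 (32 * P) * n ≤ (n : ℝ) * R i := by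
        rw [mul_comm]
        apply mul_le_mul_of_nonneg_left hlt.le (Nat.cast_nonneg n)
      have h3 : (n : ℝ) * R i ≤ ((⌈(n : ℝ) * R i⌉.toNat : ℕ) : ℝ) := by
        calc (n : ℝ) * R i ≤ ((⌈(n : ℝ) * R i⌉ : ℤ) : ℝ) := Int.le_ceil _
          _ ≤ ((⌈(n : ℝ) * R i⌉.toNat : ℕ) : ℝ) := by exact_mod_cast Int.self_le_toNat _
      calc ((32 * P) : ℝ) ^ n = (2 : ℝ) ^ (Real.logb 2 (32 * P) * n) := h1
        _ ≤ (2 : ℝ) ^ (((⌈(n : ℝ) * R i⌉.toNat : ℕ) : ℝ)) :=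
            Real.rpow_le_rpow_of_exponent_le (by norm_num) (le_trans h2 h3)
        _ = (2 : ℝ) ^ (⌈(n : ℝ) * R i⌉.toNat : ℕ) := Real.rpow_natCast _ _
        _ = ((nMsg n (R i) : ℕ) : ℝ) := by rw [nMsg]; push_cast; ring
    have hlb := err_lb (s n) H i
    rw [← hA] at hlb
    have hfrac : (A.card : ℝ) / (nMsg n (R i) : ℝ) ≤ (1/2 : ℝ) ^ n := by
      have h32 : (0 : ℝ) < (32 * P) ^ n := by positivity
      calc (A.card : ℝ) / (nMsg n (R i) : ℝ) ≤ ((16 * P) ^ n) / ((32 * P) ^ n) := by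
            apply div_le_div₀ (by positivity) hcb h32 hN
        _ = (1/2 : ℝ) ^ n := by
            rw [← div_pow]
            congr 1
            field_simp
            ring
    have hhalf : (1/2 : ℝ) ^ n ≤ 1/2 := by
      calc (1/2 : ℝ) ^ n ≤ (1/2 : ℝ) ^ 1 :=
            pow_le_pow_of_le_one (by norm_num) (by norm_num) hn
        _ = 1/2 := pow_one _
    linarith
  have hev : ∀ᶠ n in atTop, (1/2 : ℝ) ≤ (fun n => (s n).errProb H i) n :=
    Filter.eventually_atTop.mpr ⟨1, fun n hn => key n hn⟩
  have := ge_of_tendsto (herr i) hev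
  linarith




lemma logb_two_two : Real.logb 2 2 = 1 := Real.logb_self_eq_one (by norm_num)

lemma sumset_bdd {P : ℝ} (hP : 1 ≤ P) :
    ∀ x ∈ {x | ∃ R ∈ detCapacityRegion 3 Hm (fun _ => P), x = ∑ i, R i},
      x ≤ 3 * Real.logb 2 (32 * P) := by
  rintro x ⟨R, hR, rfl⟩
  rw [Fin.sum_univ_three]
  have h0 := rate_bound hP hR 0
  have h1 := rate_bound hP hR 1
  have h2 := rate_bound hP hR 2
  linarith

lemma logb_32P {P : ℝ} (hP : 1 ≤ P) : Real.logb 2 (32 * P) = 5 + Real.logb 2 P := by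
  rw [Real.logb_mul (by norm_num) (by positivity)]
  congr 1
  rw [show (32:ℝ) = 2 ^ (5:ℕ) by norm_num, Real.logb_pow, logb_two_two]
  norm_num

/-- eventual upper bound on the normalized sum capacity -/
lemma f_bounded :
    ∀ᶠ P in atTop, sSup {x | ∃ R ∈ detCapacityRegion 3 Hm (fun _ => P), x = ∑ i, R i} /
      ((1 / 2) * Real.logb 2 P) ≤ 9 := by
  rw [eventually_atTop]
  refine ⟨1024, fun P hP => ?_⟩
  have hP1 : (1:ℝ) ≤ P := by linarith
  have hlogP : (10:ℝ) ≤ Real.logb 2 P := by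
    have : Real.logb 2 1024 = 10 := by
      rw [show (1024:ℝ) = 2 ^ (10:ℕ) by norm_num, Real.logb_pow, logb_two_two]
      norm_num
    rw [← this]
    exact Real.logb_le_logb_of_le (by norm_num) (by norm_num) hP
  have hd : (0:ℝ) < (1/2) * Real.logb 2 P := by linarith
  have hsup : sSup {x | ∃ R ∈ detCapacityRegion 3 Hm (fun _ => P), x = ∑ i, R i}
      ≤ 3 * Real.logb 2 (32 * P) := by
    apply Real.sSup_le (sumset_bdd hP1)
    rw [logb_32P hP1]
    linarith
  have hnum : 3 * Real.logb 2 (32 * P) ≤ 9 * ((1/2) * Real.logb 2 P) := by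
    rw [logb_32P hP1]
    linarith
  calc sSup {x | ∃ R ∈ detCapacityRegion 3 Hm (fun _ => P), x = ∑ i, R i} /
      ((1 / 2) * Real.logb 2 P)
      ≤ (9 * ((1/2) * Real.logb 2 P)) / ((1/2) * Real.logb 2 P) :=
        (div_le_div_iff_of_pos_right hd).mpr (le_trans hsup hnum)
    _ = 9 := by field_simp
  
/-- frequently the normalized sum rate is at least the target -/
lemma f_frequent :
    ∃ᶠ P in atTop, (2 + Real.logb 2 3) / 3 ≤
      sSup {x | ∃ R ∈ detCapacityRegion 3 Hm (fun _ => P), x = ∑ i, R i} /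
        ((1 / 2) * Real.logb 2 P) := by
  rw [Filter.frequently_atTop]
  intro a
  set L : ℕ := ⌈a⌉₊ + 1 with hL
  set P : ℝ := (8:ℝ) ^ (2 * L) with hP
  have hL1 : 1 ≤ L := Nat.le_add_left 1 _
  have hPa : a ≤ P := by
    have h1 : a ≤ (⌈a⌉₊ : ℝ) := Nat.le_ceil a
    have h2 : ((L:ℕ) : ℝ) ≤ (8:ℝ) ^ (2*L) := by
      have h3 : (1:ℝ) + (2*L : ℕ) * 7 ≤ (1 + 7) ^ (2*L : ℕ) :=
        one_add_mul_le_pow (by norm_num) (2*L)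
      have h4 : ((2*L : ℕ) : ℝ) * 7 = 14 * (L:ℝ) := by push_cast; ring
      have : (1:ℝ) + 14 * L ≤ (8:ℝ)^(2*L) := by
        calc (1:ℝ) + 14 * L = 1 + (2*L : ℕ) * 7 := by rw [h4]
          _ ≤ (1 + 7) ^ (2*L : ℕ) := h3
          _ = (8:ℝ)^(2*L) := by norm_num
      have hL0 : (0:ℝ) ≤ (L:ℝ) := Nat.cast_nonneg L
      linarith
    have h5 : (⌈a⌉₊ : ℝ) + 1 = ((L : ℕ) : ℝ) := by rw [hL]; push_cast; ring
    linarith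
  refine ⟨P, hPa, ?_⟩
  have hP1 : (1:ℝ) ≤ P := by
    rw [hP]
    calc (1:ℝ) = 1 ^ (2*L) := (one_pow _).symm
      _ ≤ 8 ^ (2*L) := pow_le_pow_left₀ (by norm_num) (by norm_num) _
  have hLpos : (0:ℝ) < (L:ℝ) := by exact_mod_cast hL1
  have hlogP : Real.logb 2 P = 6 * (L:ℝ) := by
    rw [hP, show (8:ℝ) = 2 ^ (3:ℕ) by norm_num, ← pow_mul, Real.logb_pow, logb_two_two]
    push_cast
    ring
  have hbdd : BddAbove {x | ∃ R ∈ detCapacityRegion 3 Hm (fun _ => P), x = ∑ i, R i} :=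
    ⟨3 * Real.logb 2 (32 * P), fun x hx => sumset_bdd hP1 x hx⟩
  have hsup : (L:ℝ) * (2 + Real.logb 2 3)
      ≤ sSup {x | ∃ R ∈ detCapacityRegion 3 Hm (fun _ => P), x = ∑ i, R i} := by
    apply le_of_forall_pos_le_add
    intro ε hε
    have hmem := achieve_sum L ε hε
    have h := le_csSup hbdd hmem
    have hring : (L:ℝ) * (2 + Real.logb 2 3) = 2 * (L:ℝ) + (L:ℝ) * Real.logb 2 3 := by ring
    linarith
  have hd3 : (1/2) * Real.logb 2 P = 3 * (L:ℝ) := by rw [hlogP]; ring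
  rw [hd3]
  have h3L : (0:ℝ) < 3 * (L:ℝ) := by linarith
  have hne : (L:ℝ) ≠ 0 := ne_of_gt hLpos
  calc (2 + Real.logb 2 3) / 3 = ((L:ℝ) * (2 + Real.logb 2 3)) / (3 * (L:ℝ)) := by
        field_simp
    _ ≤ sSup {x | ∃ R ∈ detCapacityRegion 3 Hm (fun _ => P), x = ∑ i, R i} / (3 * (L:ℝ)) :=
        (div_le_div_iff_of_pos_right h3L).mpr hsup


/-- Lower bound of Section 5: the deterministic integer-input interference channel
with gain matrix rows `(1,0,0), (1,2,0), (1,1,1)` has degrees-of-freedom at least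
`(2 + log₂ 3)/3`. -/
theorem detDoF_example_lower_bound :
    (2 + Real.logb 2 3) / 3 ≤ detDoF 3 !![1, 0, 0; 1, 2, 0; 1, 1, 1] := by
  have h : detDoF 3 !![1, 0, 0; 1, 2, 0; 1, 1, 1] = detDoF 3 Hm := rfl
  rw [h, detDoF]
  exact le_limsup_of_frequently_le f_frequent (isBoundedUnder_of_eventually_le f_bounded)


end GIFC
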